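/- Every partition of n lying on a cycle of the Bulgarian solitaire operator B (i.e., satisfying B^p(λ) = λ for some p ≥ 1) has largest part λ₁ ≥ s - 1, where s is its number of parts; equivalently, no Garden of Eden partition lies on a cycle. -/
import Mathlib


/-- A partition of `n`: a multiset of positive integers summing to `n`
(multisets model nonincreasing sequences, since order is irrelevant). -/
def IsPartition (n : ℕ) (l : Multiset ℕ) : Prop :=
  l.sum = n ∧ ∀ x ∈ l, 0 < x

/-- The Bulgarian solitaire move: remove one card from each pile, discard empty
piles, and add a new pile whose size is the number of old piles. -/
def bulg (l : Multiset ℕ) : Multiset ℕ :=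
  (Multiset.card l ::ₘ l.map (· - 1)).filter (0 < ·)

/-- The staircase partition `(k, k-1, …, 2, 1)`. -/
def staircase (k : ℕ) : Multiset ℕ := (Multiset.range k).map (· + 1)

/-- Anything in the image of `bulg` satisfies the bound: the new pile has size
`card m`, so the sup is at least `card m`, while the number of piles is at most
`card m + 1`. -/
lemma bulg_bound (m : Multiset ℕ) : Multiset.card (bulg m) - 1 ≤ (bulg m).sup := by
  rcases Nat.eq_zero_or_pos (Multiset.card m) with h | h
  · simp [bulg, Multiset.card_eq_zero.mp h, Multiset.filter_singleton]
  · have hmem : Multiset.card m ∈ bulg m := by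
      rw [bulg, Multiset.mem_filter]
      exact ⟨Multiset.mem_cons_self _ _, h⟩
    have h1 : Multiset.card m ≤ (bulg m).sup := Multiset.le_sup hmem
    have h2 : Multiset.card (bulg m) ≤ Multiset.card m + 1 := by
      calc Multiset.card (bulg m) ≤ Multiset.card (Multiset.card m ::ₘ m.map (· - 1)) :=
            Multiset.card_le_card (Multiset.filter_le _ _)
        _ = Multiset.card m + 1 := by simp
    omega

/-- Every partition lying on a cycle of the Bulgarian solitaire has largest
part at least one less than its number of parts; equivalently, no Garden of
Eden partition lies on a cycle. -/
theorem cycle_not_gardenOfEden (n : ℕ) (l : Multiset ℕ) (hl : IsPartition n l)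
    (hcyc : ∃ p : ℕ, 1 ≤ p ∧ bulg^[p] l = l) :
    Multiset.card l - 1 ≤ l.sup := by
  obtain ⟨p, hp, hfix⟩ := hcyc
  obtain ⟨q, rfl⟩ : ∃ q, p = q + 1 := ⟨p - 1, by omega⟩
  rw [Function.iterate_succ_apply'] at hfix
  rw [← hfix]
  exact bulg_bound _
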